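/- arXiv:1612.00401 — 5 statements merged into one kernel-verified Lean document; each statement's English description precedes it below -/
import Mathlib

section
/- For every complex matrix J of size n×n, the 2n×2n block matrix with blocks [[√(JJᴴ), −J], [−Jᴴ, √(JᴴJ)]] is positive semidefinite, where √(JJᴴ) and √(JᴴJ) denote the positive semidefinite square roots of JJᴴ and JᴴJ respectively. -/
open Matrix
open scoped ComplexOrder
open scoped MatrixOrder

/-- Block-diagonal of two PSD matrices is PSD. -/
lemma aux_posSemidef_fromBlocks_diag {m l : Type*} [Fintype m] [DecidableEq m]
    [Fintype l] [DecidableEq l] {A : Matrix m m ℂ} {B : Matrix l l ℂ}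
    (hA : A.PosSemidef) (hB : B.PosSemidef) :
    (Matrix.fromBlocks A 0 0 B).PosSemidef := by
  have h : Matrix.fromBlocks A 0 0 B =
      (Matrix.fromBlocks (CFC.sqrt A) 0 0 (CFC.sqrt B))ᴴ * (Matrix.fromBlocks (CFC.sqrt A) 0 0 (CFC.sqrt B)) := by
    rw [Matrix.fromBlocks_conjTranspose, Matrix.fromBlocks_multiply]
    simp [(CFC.sqrt_nonneg A).posSemidef.isHermitian.eq, (CFC.sqrt_nonneg B).posSemidef.isHermitian.eq,
      CFC.sqrt_mul_sqrt_self A hA.nonneg, CFC.sqrt_mul_sqrt_self B hB.nonneg]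
  rw [h]
  exact Matrix.posSemidef_conjTranspose_mul_self _

/-- For a Hermitian matrix `A` with `A ^ 2 = B`, `√B - A` is PSD. -/
lemma aux_sqrt_sub_posSemidef {m : Type*} [Fintype m] [DecidableEq m]
    {A B : Matrix m m ℂ} (hA : A.IsHermitian) (hB : B.PosSemidef) (h : A ^ 2 = B) :
    (CFC.sqrt B - A).PosSemidef := by
  set U : Matrix m m ℂ := (hA.eigenvectorUnitary : Matrix m m ℂ)
  have hU : star U * U = 1 := Matrix.mem_unitaryGroup_iff'.mp hA.eigenvectorUnitary.2
  set μ : m → ℝ := hA.eigenvalues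
  set D : Matrix m m ℂ := Matrix.diagonal (fun i => ((μ i : ℝ) : ℂ))
  set D1 : Matrix m m ℂ := Matrix.diagonal (fun i => ((|μ i| : ℝ) : ℂ))
  have hspec : A = U * D * star U := hA.spectral_theorem
  have hD1 : D1.PosSemidef := by
    refine Matrix.posSemidef_diagonal_iff.mpr fun i => ?_
    simp [Complex.zero_le_real, abs_nonneg]
  have hC : (U * D1 * star U).PosSemidef := by
    rw [Matrix.star_eq_conjTranspose]
    exact hD1.mul_mul_conjTranspose_same U
  have hC2 : (U * D1 * star U) ^ 2 = B := by
    rw [← h, hspec, pow_two, pow_two]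
    have e : ∀ (E F : Matrix m m ℂ), (U * E * star U) * (U * F * star U)
        = U * (E * F) * star U := by
      intro E F
      calc (U * E * star U) * (U * F * star U)
          = U * E * (star U * U) * F * star U := by noncomm_ring
        _ = U * (E * F) * star U := by rw [hU]; noncomm_ring
    rw [e, e, Matrix.diagonal_mul_diagonal, Matrix.diagonal_mul_diagonal]
    have heq : (fun i => ((|μ i| : ℝ) : ℂ) * ((|μ i| : ℝ) : ℂ))
        = fun i => ((μ i : ℝ) : ℂ) * ((μ i : ℝ) : ℂ) := by
      funext i
      rw [← Complex.ofReal_mul, ← Complex.ofReal_mul, ← sq, ← sq, sq_abs]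
    rw [heq]
  have hCsq : (U * D1 * star U) = CFC.sqrt B :=
    (CFC.sqrt_unique (by rw [← pow_two]; exact hC2) hC.nonneg).symm
  rw [← hCsq, hspec]
  have e2 : U * D1 * star U - U * D * star U = U * (D1 - D) * star U := by noncomm_ring
  rw [e2, Matrix.star_eq_conjTranspose]
  refine Matrix.PosSemidef.mul_mul_conjTranspose_same ?_ U
  rw [Matrix.diagonal_sub]
  refine Matrix.posSemidef_diagonal_iff.mpr fun i => ?_
  rw [← Complex.ofReal_sub]
  simpa [Complex.zero_le_real] using le_abs_self (μ i)

/-- For every complex square matrix `J`, the block matrix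
`[[√(JJᴴ), −J], [−Jᴴ, √(JᴴJ)]]` is positive semidefinite, where `√` denotes the
positive semidefinite square root. -/
theorem stmt0 (n : ℕ) (J : Matrix (Fin n) (Fin n) ℂ) :
    (Matrix.fromBlocks
      (CFC.sqrt (J * Jᴴ)) (-J)
      (-Jᴴ) (CFC.sqrt (Jᴴ * J))).PosSemidef := by
  set H : Matrix (Fin n ⊕ Fin n) (Fin n ⊕ Fin n) ℂ := Matrix.fromBlocks 0 J Jᴴ 0
  have hH : H.IsHermitian := by
    unfold Matrix.IsHermitian
    rw [show H = Matrix.fromBlocks 0 J Jᴴ 0 from rfl, Matrix.fromBlocks_conjTranspose]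
    simp
  have hQ := Matrix.posSemidef_self_mul_conjTranspose J
  have hP := Matrix.posSemidef_conjTranspose_mul_self J
  have hB : (Matrix.fromBlocks (J * Jᴴ) 0 0 (Jᴴ * J)).PosSemidef :=
    aux_posSemidef_fromBlocks_diag hQ hP
  have hsq : H ^ 2 = Matrix.fromBlocks (J * Jᴴ) 0 0 (Jᴴ * J) := by
    rw [pow_two, show H = Matrix.fromBlocks 0 J Jᴴ 0 from rfl, Matrix.fromBlocks_multiply]
    simp
  have hSqrtEq : CFC.sqrt (Matrix.fromBlocks (J * Jᴴ) 0 0 (Jᴴ * J)) =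
      Matrix.fromBlocks (CFC.sqrt (J * Jᴴ)) 0 0 (CFC.sqrt (Jᴴ * J)) := by
    refine CFC.sqrt_unique ?_ (aux_posSemidef_fromBlocks_diag
      (CFC.sqrt_nonneg (J * Jᴴ)).posSemidef (CFC.sqrt_nonneg (Jᴴ * J)).posSemidef).nonneg
    rw [Matrix.fromBlocks_multiply]
    simp [CFC.sqrt_mul_sqrt_self _ hQ.nonneg, CFC.sqrt_mul_sqrt_self _ hP.nonneg]
  have hgoal : Matrix.fromBlocks (CFC.sqrt (J * Jᴴ)) (-J) (-Jᴴ) (CFC.sqrt (Jᴴ * J)) =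
      CFC.sqrt (Matrix.fromBlocks (J * Jᴴ) 0 0 (Jᴴ * J)) - H := by
    rw [hSqrtEq, show H = Matrix.fromBlocks 0 J Jᴴ 0 from rfl]
    ext (i | i) (j | j) <;> simp [Matrix.fromBlocks, Matrix.sub_apply]
  rw [hgoal]
  exact aux_sqrt_sub_posSemidef hH hB hsq
end

section
/- Let ρ be a positive semidefinite complex n×n matrix with trace 1 and let x ∈ ℂⁿ be a unit vector. Then the trace norm of ρ − xxᴴ satisfies ‖ρ − xxᴴ‖₁ ≥ 2 − 2‖ρ‖∞, where ‖ρ‖∞ is the operator norm of ρ. -/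
open Matrix
open scoped ComplexOrder

/-- The trace (Schatten-1) norm of a complex square matrix: the trace of the positive
semidefinite square root of `XᴴX`. -/
noncomputable def traceNorm {n : ℕ} (X : Matrix (Fin n) (Fin n) ℂ) : ℝ :=
  (Matrix.trace (((Matrix.posSemidef_conjTranspose_mul_self X).1.eigenvectorUnitary : Matrix (Fin n) (Fin n) ℂ) *
    diagonal (((↑) : ℝ → ℂ) ∘ Real.sqrt ∘ (Matrix.posSemidef_conjTranspose_mul_self X).1.eigenvalues) *
    star ((Matrix.posSemidef_conjTranspose_mul_self X).1.eigenvectorUnitary : Matrix (Fin n) (Fin n) ℂ))).re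

/-- The ℓ²→ℓ² operator norm of a complex matrix. -/
noncomputable def l2OpNorm {n : ℕ} (X : Matrix (Fin n) (Fin n) ℂ) : ℝ :=
  ‖Matrix.toEuclideanCLM (𝕜 := ℂ) X‖

/-- The trace norm of a Hermitian matrix is the sum of the absolute values of its
eigenvalues. -/
lemma traceNorm_aux {n : ℕ} (Δ : Matrix (Fin n) (Fin n) ℂ) (hΔ : Δ.IsHermitian) :
    traceNorm Δ = ∑ i, |hΔ.eigenvalues i| := by
  rw [traceNorm]
  set U : Matrix (Fin n) (Fin n) ℂ := (hΔ.eigenvectorUnitary : Matrix (Fin n) (Fin n) ℂ) with hU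
  have hUU : star U * U = 1 := mem_unitaryGroup_iff'.mp hΔ.eigenvectorUnitary.2
  set d : Fin n → ℂ := fun i => ((|hΔ.eigenvalues i| : ℝ) : ℂ) with hd
  set S : Matrix (Fin n) (Fin n) ℂ := U * diagonal d * star U with hSdef
  have hdiag : (diagonal d).PosSemidef :=
    posSemidef_diagonal_iff.mpr fun i => Complex.zero_le_real.mpr (abs_nonneg _)
  have hS : S.PosSemidef := by
    rw [hSdef, star_eq_conjTranspose]
    exact hdiag.mul_mul_conjTranspose_same U
  have key : ∀ (e : Fin n → ℂ), (U * diagonal e * star U) * (U * diagonal e * star U)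
      = U * (diagonal e * diagonal e) * star U := by
    intro e
    have h1 : star U * (U * (diagonal e * star U)) = diagonal e * star U := by
      rw [← mul_assoc, hUU, one_mul]
    simp only [mul_assoc, h1]
  have spec := hΔ.spectral_theorem
  rw [Unitary.conjStarAlgAut_apply, ← hU] at spec
  have hDD : diagonal d * diagonal d
      = diagonal ((RCLike.ofReal : ℝ → ℂ) ∘ hΔ.eigenvalues)
        * diagonal ((RCLike.ofReal : ℝ → ℂ) ∘ hΔ.eigenvalues) := by
    rw [diagonal_mul_diagonal, diagonal_mul_diagonal]
    refine congrArg diagonal ?_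
    funext i
    show ((|hΔ.eigenvalues i| : ℝ) : ℂ) * ((|hΔ.eigenvalues i| : ℝ) : ℂ)
      = ((hΔ.eigenvalues i : ℝ) : ℂ) * ((hΔ.eigenvalues i : ℝ) : ℂ)
    rw [← Complex.ofReal_mul, ← Complex.ofReal_mul, abs_mul_abs_self]
  have hsq : S ^ 2 = Δᴴ * Δ := by
    rw [hΔ.eq, pow_two, hSdef, key]
    conv_rhs => rw [spec]
    rw [key, hDD]
  have hSeq : S = ((Matrix.posSemidef_conjTranspose_mul_self Δ).1.eigenvectorUnitary : Matrix (Fin n) (Fin n) ℂ) *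
      diagonal (((↑) : ℝ → ℂ) ∘ Real.sqrt ∘ (Matrix.posSemidef_conjTranspose_mul_self Δ).1.eigenvalues) *
      star ((Matrix.posSemidef_conjTranspose_mul_self Δ).1.eigenvectorUnitary : Matrix (Fin n) (Fin n) ℂ) := by
    have hsa : IsSelfAdjoint Δ := hΔ
    have e1 := (Matrix.posSemidef_conjTranspose_mul_self Δ).1.cfc_eq Real.sqrt
    rw [IsHermitian.cfc, Unitary.conjStarAlgAut_apply] at e1
    refine (?_ : S = cfc Real.sqrt (Δᴴ * Δ)).trans e1
    rw [hΔ.eq, ← pow_two, ← cfc_pow_id (R := ℝ) Δ 2, ← cfc_comp Real.sqrt (· ^ 2 : ℝ → ℝ) Δ]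
    have e2 : (Real.sqrt ∘ (· ^ 2 : ℝ → ℝ)) = abs := funext fun y => Real.sqrt_sq_eq_abs y
    rw [e2, hΔ.cfc_eq, IsHermitian.cfc, Unitary.conjStarAlgAut_apply]
    rfl
  rw [← hSeq, hSdef, trace_mul_cycle, hUU, one_mul, trace_diagonal]
  simp [hd]

/-- For a positive semidefinite `ρ` with trace 1 and a unit vector `x`,
`‖ρ − xxᴴ‖₁ ≥ 2 − 2‖ρ‖∞`. -/
theorem stmt10 (n : ℕ) (ρ : Matrix (Fin n) (Fin n) ℂ) (hρ : ρ.PosSemidef)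
    (htr : Matrix.trace ρ = 1) (x : Fin n → ℂ) (hx : ∑ i, Complex.normSq (x i) = 1) :
    2 - 2 * l2OpNorm ρ ≤ traceNorm (ρ - Matrix.vecMulVec x (star x)) := by
  classical
  set M : Matrix (Fin n) (Fin n) ℂ := vecMulVec x (star x) with hM
  have hMH : M.IsHermitian := by
    ext i j
    simp [hM, conjTranspose_apply, vecMulVec_apply, mul_comm]
  have hΔ : (ρ - M).IsHermitian := hρ.1.sub hMH
  set lam : Fin n → ℝ := hΔ.eigenvalues with hlam
  set U : Matrix (Fin n) (Fin n) ℂ := (hΔ.eigenvectorUnitary : Matrix (Fin n) (Fin n) ℂ) with hU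
  have hUU : star U * U = 1 := mem_unitaryGroup_iff'.mp hΔ.eigenvectorUnitary.2
  have hUU' : U * star U = 1 := mem_unitaryGroup_iff.mp hΔ.eigenvectorUnitary.2
  set c : Fin n → ℂ := star U *ᵥ x with hc
  set t : Fin n → ℝ := fun i => Complex.normSq (c i) with ht
  have spec := hΔ.spectral_theorem
  rw [Unitary.conjStarAlgAut_apply, ← hU] at spec
  have hstarc : star c = star x ᵥ* U := by
    rw [hc, star_mulVec, ← star_eq_conjTranspose, star_star]
  -- F1
  have F1 : star x ⬝ᵥ x = 1 := by
    have : star x ⬝ᵥ x = ((∑ i, Complex.normSq (x i) : ℝ) : ℂ) := by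
      push_cast
      simp [dotProduct, Complex.normSq_eq_conj_mul_self]
    rw [this, hx, Complex.ofReal_one]
  -- F2
  have F2 : star x ⬝ᵥ M *ᵥ x = 1 := by
    have hMx : M *ᵥ x = (star x ⬝ᵥ x) • x := by
      ext i
      simp [hM, mulVec, vecMulVec_apply, dotProduct, Finset.mul_sum, mul_comm, mul_left_comm]
    rw [hMx, F1, one_smul, F1]
  -- F3
  have F3 : star c ⬝ᵥ c = 1 := by
    rw [hstarc, hc, dotProduct_mulVec, vecMul_vecMul, hUU', vecMul_one, F1]
  -- F7
  have F7 : ∑ i, t i = 1 := by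
    have h := F3
    have hcc : star c ⬝ᵥ c = ((∑ i, t i : ℝ) : ℂ) := by
      push_cast
      simp [dotProduct, ht, Complex.normSq_eq_conj_mul_self]
    rw [hcc] at h
    exact_mod_cast h
  -- F4
  have F4 : star x ⬝ᵥ (ρ - M) *ᵥ x = ∑ i, (lam i : ℂ) * (t i : ℝ) := by
    conv_lhs => rw [spec]
    rw [← mulVec_mulVec, ← mulVec_mulVec, dotProduct_mulVec, ← hstarc, ← hc]
    have hdc : (diagonal ((RCLike.ofReal : ℝ → ℂ) ∘ lam)) *ᵥ c = fun i => (lam i : ℂ) * c i := by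
      ext i
      simp [mulVec_diagonal]
    rw [hdc]
    simp only [dotProduct, Pi.star_apply]
    refine Finset.sum_congr rfl fun i _ => ?_
    rw [ht]
    push_cast
    rw [Complex.normSq_eq_conj_mul_self]
    simp only [Pi.star_apply, Complex.star_def]
    ring
  -- F5, F6
  have F5 : Matrix.trace (ρ - M) = 0 := by
    have htrM : Matrix.trace M = 1 := by
      have : Matrix.trace M = ((∑ i, Complex.normSq (x i) : ℝ) : ℂ) := by
        push_cast
        simp [hM, Matrix.trace, Matrix.diag, vecMulVec_apply, Complex.normSq_eq_conj_mul_self,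
          mul_comm]
      rw [this, hx, Complex.ofReal_one]
    rw [trace_sub, htr, htrM, sub_self]
  have F6 : ∑ i, lam i = 0 := by
    have h1 : Matrix.trace (ρ - M) = ((∑ i, lam i : ℝ) : ℂ) := by
      conv_lhs => rw [spec]
      rw [trace_mul_cycle, hUU, one_mul, trace_diagonal]
      push_cast
      rfl
    rw [F5] at h1
    exact_mod_cast h1.symm
  -- F8
  have F8 : (star x ⬝ᵥ ρ *ᵥ x).re ≤ l2OpNorm ρ := by
    set y : EuclideanSpace ℂ (Fin n) := (WithLp.equiv 2 _).symm x with hy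
    have hny : ‖y‖ = 1 := by
      rw [EuclideanSpace.norm_eq]
      have : ∀ i, ‖x i‖ ^ 2 = Complex.normSq (x i) := fun i => by
        rw [← Complex.sq_norm]
      simp only [hy, WithLp.equiv_symm_apply, WithLp.ofLp_toLp]
      rw [show ∑ i, ‖x i‖ ^ 2 = 1 by rw [Finset.sum_congr rfl fun i _ => this i, hx]]
      exact Real.sqrt_one
    set T := Matrix.toEuclideanCLM (𝕜 := ℂ) ρ with hT
    have hinner : (inner ℂ y (T y) : ℂ) = star x ⬝ᵥ ρ *ᵥ x := by
      simp [hy, hT, PiLp.inner_apply, dotProduct, mul_comm]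
    have h1 : (star x ⬝ᵥ ρ *ᵥ x).re ≤ ‖(inner ℂ y (T y) : ℂ)‖ := by
      rw [hinner]
      exact Complex.re_le_norm _
    refine h1.trans ?_
    calc ‖(inner ℂ y (T y) : ℂ)‖ ≤ ‖y‖ * ‖T y‖ := norm_inner_le_norm y (T y)
      _ ≤ ‖y‖ * (‖T‖ * ‖y‖) := by
          exact mul_le_mul_of_nonneg_left (T.le_opNorm y) (norm_nonneg y)
      _ = ‖T‖ := by rw [hny]; ring
  -- assembly
  have hb : ∀ i, 0 ≤ t i := fun i => Complex.normSq_nonneg _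
  have ht1 : ∀ i, t i ≤ 1 := by
    intro i
    rw [← F7]
    exact Finset.single_le_sum (fun j _ => hb j) (Finset.mem_univ i)
  have habs : ∀ i ∈ Finset.univ, lam i * (1 - 2 * t i) ≤ |lam i| := by
    intro i _
    calc lam i * (1 - 2 * t i) ≤ |lam i * (1 - 2 * t i)| := le_abs_self _
      _ = |lam i| * |1 - 2 * t i| := abs_mul _ _
      _ ≤ |lam i| * 1 := by
          refine mul_le_mul_of_nonneg_left ?_ (abs_nonneg _)
          rw [abs_le]
          constructor <;> [linarith [ht1 i]; linarith [hb i]]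
      _ = |lam i| := mul_one _
  have hlt : ∑ i, lam i * t i = (star x ⬝ᵥ ρ *ᵥ x).re - 1 := by
    have h1 : (star x ⬝ᵥ (ρ - M) *ᵥ x).re = ∑ i, lam i * t i := by
      rw [F4]
      push_cast
      rw [Complex.re_sum]
      refine Finset.sum_congr rfl fun i _ => ?_
      rw [← Complex.ofReal_mul, Complex.ofReal_re]
    have h2 : star x ⬝ᵥ (ρ - M) *ᵥ x = star x ⬝ᵥ ρ *ᵥ x - 1 := by
      rw [sub_mulVec, dotProduct_sub, F2]
    rw [h2] at h1
    rw [← h1]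
    simp
  have hfinal : ∑ i, lam i * (1 - 2 * t i) = 2 - 2 * (star x ⬝ᵥ ρ *ᵥ x).re := by
    have : ∀ i, lam i * (1 - 2 * t i) = lam i - 2 * (lam i * t i) := fun i => by ring
    rw [Finset.sum_congr rfl fun i _ => this i, Finset.sum_sub_distrib, F6, ← Finset.mul_sum,
      hlt]
    ring
  rw [traceNorm_aux _ hΔ, ← hlam]
  calc 2 - 2 * l2OpNorm ρ ≤ 2 - 2 * (star x ⬝ᵥ ρ *ᵥ x).re := by linarith
    _ = ∑ i, lam i * (1 - 2 * t i) := hfinal.symm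
    _ ≤ ∑ i, |lam i| := Finset.sum_le_sum habs
end

section
/- For x > 0 put a = (√x − 1)², b = (√x + 1)², and define g(x) = 3/2 − x + √(4x−1)(2x+1)/(2πx) − (1/π)·[(x−1)·arctan((3x−1)/((x−1)√(4x−1))) + arctan(√(4x−1)) + x·arctan(1/√(4x−1))] for x > 1/4. Then the quantity I(x) = max(1−x, 0) + ∫_a^b |u/x − 1| · √(4x − (u−1−x)²)/(2πu) du equals 2(1−x) for x ∈ (0, 1/4], equals g(x) for x ∈ (1/4, 1), and equals g(x) + x − 1 for x ≥ 1. -/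
open MeasureTheory Real

/-- The function `g` of the distance-to-depolarizing theorem. -/
noncomputable def g (x : ℝ) : ℝ :=
  3/2 - x + Real.sqrt (4 * x - 1) * (2 * x + 1) / (2 * Real.pi * x) -
    (1 / Real.pi) *
      ((x - 1) * Real.arctan ((3 * x - 1) / ((x - 1) * Real.sqrt (4 * x - 1))) +
        Real.arctan (Real.sqrt (4 * x - 1)) +
        x * Real.arctan (1 / Real.sqrt (4 * x - 1)))

/-- `I(x) = ∫ |u/x − 1| dMP_x(u)`: the atom at `0` contributes `max(1−x,0)`, and the
absolutely continuous part has density `√(4x − (u−1−x)²)/(2πu)` on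
`[(√x−1)², (√x+1)²]`. -/
noncomputable def Ifun (x : ℝ) : ℝ :=
  max (1 - x) 0 +
    ∫ u in Set.Icc ((Real.sqrt x - 1) ^ 2) ((Real.sqrt x + 1) ^ 2),
      |u / x - 1| * Real.sqrt (4 * x - (u - 1 - x) ^ 2) / (2 * Real.pi * u)

noncomputable def Fx (x u : ℝ) : ℝ :=
  (((u - 1 - x) * Real.sqrt (4*x - (u-1-x)^2)
      + 4*x*Real.arcsin ((u-1-x)/(2*Real.sqrt x))) / (2*x)
    - (Real.sqrt (4*x - (u-1-x)^2) + (1+x)*Real.arcsin ((u-1-x)/(2*Real.sqrt x))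
       + |1-x| * Real.arcsin (((1-x)^2 - (1+x)*u)/(2*Real.sqrt x*u)))) / (2*Real.pi)

lemma hasDeriv_Fx (x : ℝ) (hx : 0 < x) (hx1 : x ≠ 1) {u : ℝ} (hu : 0 < u)
    (h4 : (u - 1 - x)^2 < 4*x) :
    HasDerivAt (Fx x) ((u/x - 1) * Real.sqrt (4*x - (u-1-x)^2) / (2*Real.pi*u)) u := by
  have ht : 0 < Real.sqrt x := Real.sqrt_pos.2 hx
  set t := Real.sqrt x with htdef
  have ht2 : t^2 = x := Real.sq_sqrt hx.le
  have hs : 0 < Real.sqrt (4*x - (u-1-x)^2) := Real.sqrt_pos.2 (by linarith)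
  set s := Real.sqrt (4*x - (u-1-x)^2) with hsdef
  have hs2 : s^2 = 4*x - (u-1-x)^2 := Real.sq_sqrt (by linarith)
  have hd : 0 < |1-x| := abs_pos.2 (by intro h; apply hx1; linarith)
  set d := |1-x| with hddef
  have hd2 : d^2 = (1-x)^2 := sq_abs _
  -- derivative of the sqrt part
  have hpoly : HasDerivAt (fun u : ℝ => 4*x - (u-1-x)^2) (-(2*(u-1-x))) u := by
    have h1 : HasDerivAt (fun u : ℝ => u - 1 - x) 1 u :=
      ((hasDerivAt_id u).sub_const 1).sub_const x
    exact ((hasDerivAt_const u (4*x)).sub (h1.pow 2)).congr_deriv (by norm_num)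
  have hsq : HasDerivAt (fun u : ℝ => Real.sqrt (4*x - (u-1-x)^2)) (-((u-1-x)/s)) u := by
    have := hpoly.sqrt (ne_of_gt (by linarith : (0:ℝ) < 4*x - (u-1-x)^2))
    convert this using 1
    rw [← hsdef]
    field_simp
  -- first arcsin
  have hlt : u - 1 - x < 2*t := by nlinarith
  have hgt : -(2*t) < u - 1 - x := by nlinarith
  have hy1 : (u-1-x)/(2*t) < 1 := by rw [div_lt_one (by positivity)]; linarith
  have hy2 : -1 < (u-1-x)/(2*t) := by
    rw [lt_div_iff₀ (by positivity)]; linarith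
  have hsq1 : Real.sqrt (1 - ((u-1-x)/(2*t))^2) = s/(2*t) := by
    have h4t : (2*t)^2 = 4*x := by rw [mul_pow, ht2]; ring
    rw [show 1 - ((u-1-x)/(2*t))^2 = (s/(2*t))^2 by
      rw [div_pow, div_pow, h4t, hs2]; field_simp]
    exact Real.sqrt_sq (by positivity)
  have harc1 : HasDerivAt (fun u : ℝ => Real.arcsin ((u-1-x)/(2*t))) (1/s) u := by
    have hinner : HasDerivAt (fun u : ℝ => (u-1-x)/(2*t)) (1/(2*t)) u := by
      simpa using (((hasDerivAt_id u).sub_const 1).sub_const x).div_const (2*t)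
    have := (Real.hasDerivAt_arcsin (ne_of_gt hy2) (ne_of_lt hy1)).comp u hinner
    refine this.congr_deriv ?_
    rw [hsq1]
    field_simp
  -- second arcsin
  set m := ((1-x)^2 - (1+x)*u)/(2*t*u) with hmdef
  have hden : 2*t*u ≠ 0 := by positivity
  have hkey : 1 - m^2 = (d*s/(2*t*u))^2 := by
    have h4t : (2*t)^2 = 4*x := by rw [mul_pow, ht2]; ring
    rw [hmdef, div_pow, div_pow, mul_pow (2*t) u, mul_pow d s, h4t, hd2, hs2]
    field_simp
    ring
  have hm2 : m^2 < 1 := by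
    have hpos : 0 < (d*s/(2*t*u))^2 := by positivity
    linarith [hkey]
  have hm1 : m ≠ 1 := by intro h; rw [h] at hm2; norm_num at hm2
  have hmneg : m ≠ -1 := by intro h; rw [h] at hm2; norm_num at hm2
  have hsqm : Real.sqrt (1 - m^2) = d*s/(2*t*u) := by
    rw [hkey]; exact Real.sqrt_sq (by positivity)
  have harc2 : HasDerivAt (fun u : ℝ => Real.arcsin (((1-x)^2 - (1+x)*u)/(2*t*u)))
      (-((1-x)^2/(d*s*u))) u := by
    have hnum : HasDerivAt (fun u : ℝ => (1-x)^2 - (1+x)*u) (-(1+x)) u := by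
      exact ((hasDerivAt_const u ((1-x)^2)).sub ((hasDerivAt_id u).const_mul (1+x))).congr_deriv (by ring)
    have hdenom : HasDerivAt (fun u : ℝ => 2*t*u) (2*t) u := by
      simpa using (hasDerivAt_id u).const_mul (2*t)
    have hinner : HasDerivAt (fun u : ℝ => ((1-x)^2 - (1+x)*u)/(2*t*u))
        ((-(1+x)*(2*t*u) - ((1-x)^2 - (1+x)*u)*(2*t))/(2*t*u)^2) u :=
      hnum.div hdenom hden
    have := (Real.hasDerivAt_arcsin hmneg hm1).comp u hinner
    refine this.congr_deriv ?_
    rw [hsqm]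
    field_simp
    ring
  have h1 : HasDerivAt (fun u : ℝ => (u-1-x) * Real.sqrt (4*x-(u-1-x)^2))
      (1*s + (u-1-x)*(-((u-1-x)/s))) u :=
    (((hasDerivAt_id u).sub_const 1).sub_const x).mul hsq
  have hF : HasDerivAt (Fx x)
      (((1*s + (u-1-x)*(-((u-1-x)/s)) + (4*x)*(1/s))/(2*x)
        - ((-((u-1-x)/s)) + (1+x)*(1/s) + d*(-((1-x)^2/(d*s*u)))))/(2*Real.pi)) u := by
    unfold Fx
    rw [← htdef]
    exact (((h1.add (harc1.const_mul (4*x))).div_const (2*x)).sub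
      ((hsq.add (harc1.const_mul (1+x))).add (harc2.const_mul d))).div_const (2*Real.pi)
  have hA : 1*s + (u-1-x)*(-((u-1-x)/s)) + (4*x)*(1/s) = 2*s := by
    field_simp; linear_combination -hs2
  have hB : (-((u-1-x)/s)) + (1+x)*(1/s) + d*(-((1-x)^2/(d*s*u))) = s/u := by
    field_simp; linear_combination -hs2
  rw [hA, hB] at hF
  convert hF using 1
  field_simp

lemma ftc (x : ℝ) (hx : 0 < x) (hx1 : x ≠ 1) {v w : ℝ}
    (hav : (Real.sqrt x - 1)^2 ≤ v) (hvw : v ≤ w) (hwb : w ≤ (Real.sqrt x + 1)^2) :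
    ∫ u in v..w, (u/x - 1) * Real.sqrt (4*x - (u-1-x)^2) / (2*Real.pi*u)
      = Fx x w - Fx x v := by
  have ht : 0 < Real.sqrt x := Real.sqrt_pos.2 hx
  have ht2 : Real.sqrt x ^ 2 = x := Real.sq_sqrt hx.le
  have htne : Real.sqrt x ≠ 1 := fun h => hx1 (by rw [← ht2, h]; norm_num)
  have ha : 0 < (Real.sqrt x - 1)^2 := by
    have h2 : Real.sqrt x - 1 ≠ 0 := sub_ne_zero.2 htne
    positivity
  have hv0 : 0 < v := lt_of_lt_of_le ha hav
  have hne0 : ∀ u ∈ Set.Icc v w, u ≠ 0 := fun u hu => ne_of_gt (lt_of_lt_of_le hv0 hu.1)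
  have hcont : ContinuousOn (Fx x) (Set.Icc v w) := by
    unfold Fx
    apply ContinuousOn.div_const
    have harc : Continuous (fun u : ℝ => Real.arcsin ((u-1-x)/(2*Real.sqrt x))) :=
      Real.continuous_arcsin.comp (by fun_prop)
    apply ContinuousOn.sub
    · exact Continuous.continuousOn (by fun_prop (disch := exact harc))
    · apply ContinuousOn.add (Continuous.continuousOn (by fun_prop (disch := exact harc)))
      apply ContinuousOn.mul continuousOn_const
      apply Real.continuous_arcsin.comp_continuousOn
      apply ContinuousOn.div (by fun_prop) (by fun_prop)
      intro u hu
      exact mul_ne_zero (by positivity) (hne0 u hu)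
  have hbd : ∀ u ∈ Set.Ioo v w, 0 < u ∧ (u - 1 - x)^2 < 4*x := by
    intro u hu
    have h1 : (Real.sqrt x - 1)^2 < u := lt_of_le_of_lt hav hu.1
    have h2 : u < (Real.sqrt x + 1)^2 := lt_of_lt_of_le hu.2 hwb
    have hl : u - 1 - x < 2 * Real.sqrt x := by nlinarith
    have hg : -(2 * Real.sqrt x) < u - 1 - x := by nlinarith
    constructor
    · exact lt_of_lt_of_le ha (le_of_lt h1)
    · nlinarith
  apply intervalIntegral.integral_eq_sub_of_hasDeriv_right_of_le hvw hcont
  · intro u hu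
    exact (hasDeriv_Fx x hx hx1 (hbd u hu).1 (hbd u hu).2).hasDerivWithinAt
  · apply ContinuousOn.intervalIntegrable_of_Icc hvw
    apply ContinuousOn.div (by fun_prop) (by fun_prop)
    intro u hu
    have := Real.pi_ne_zero
    exact mul_ne_zero (by positivity) (hne0 u hu)

lemma Fx_b (x : ℝ) (hx : 0 < x) : Fx x ((Real.sqrt x + 1)^2) = 1/2 - (1+x-|1-x|)/4 := by
  have ht : 0 < Real.sqrt x := Real.sqrt_pos.2 hx
  unfold Fx
  set t := Real.sqrt x with htdef
  have ht2 : t^2 = x := Real.sq_sqrt hx.le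
  rw [← ht2]
  rw [show 4*t^2 - ((t+1)^2 - 1 - t^2)^2 = 0 by ring, Real.sqrt_zero]
  rw [show ((t+1)^2 - 1 - t^2)/(2*t) = 1 by field_simp; ring]
  rw [show ((1-t^2)^2 - (1+t^2)*(t+1)^2)/(2*t*(t+1)^2) = -1 by
    rw [div_eq_iff (by positivity)]; ring]
  rw [Real.arcsin_one, Real.arcsin_neg_one]
  have hpi := Real.pi_ne_zero
  have htne : t ≠ 0 := ne_of_gt ht
  field_simp
  ring

lemma Fx_a (x : ℝ) (hx : 0 < x) (hx1 : x ≠ 1) :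
    Fx x ((Real.sqrt x - 1)^2) = -(1/2) + (1+x-|1-x|)/4 := by
  have ht : 0 < Real.sqrt x := Real.sqrt_pos.2 hx
  unfold Fx
  set t := Real.sqrt x with htdef
  have ht2 : t^2 = x := Real.sq_sqrt hx.le
  have htne : t ≠ 1 := fun h => hx1 (by rw [← ht2, h]; norm_num)
  have htne2 : t - 1 ≠ 0 := sub_ne_zero.2 htne
  rw [← ht2]
  rw [show 4*t^2 - ((t-1)^2 - 1 - t^2)^2 = 0 by ring, Real.sqrt_zero]
  rw [show ((t-1)^2 - 1 - t^2)/(2*t) = -1 by field_simp; ring]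
  rw [show ((1-t^2)^2 - (1+t^2)*(t-1)^2)/(2*t*(t-1)^2) = 1 by
    rw [div_eq_iff (mul_ne_zero (by positivity) (pow_ne_zero 2 htne2))]; ring]
  rw [Real.arcsin_one, Real.arcsin_neg_one]
  have hpi := Real.pi_ne_zero
  have htne0 : t ≠ 0 := ne_of_gt ht
  field_simp
  ring

lemma Fx_x (x : ℝ) (hx : 0 < x) :
    Fx x x = (-(Real.sqrt (4*x-1))*(2*x+1)/(2*x)
      + (x-1)*Real.arcsin (1/(2*Real.sqrt x))
      + |1-x| * Real.arcsin ((3*x-1)/(2*Real.sqrt x*x)))/(2*Real.pi) := by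
  have ht : 0 < Real.sqrt x := Real.sqrt_pos.2 hx
  unfold Fx
  rw [show x - 1 - x = (-1 : ℝ) by ring]
  rw [show 4*x - (-1:ℝ)^2 = 4*x - 1 by ring]
  rw [show (-1:ℝ)/(2*Real.sqrt x) = -(1/(2*Real.sqrt x)) by ring, Real.arcsin_neg]
  rw [show ((1-x)^2 - (1+x)*x)/(2*Real.sqrt x*x) = -((3*x-1)/(2*Real.sqrt x*x)) by
    rw [← neg_div]; congr 1; ring, Real.arcsin_neg]
  have hpi := Real.pi_ne_zero
  have htne0 : Real.sqrt x ≠ 0 := ne_of_gt ht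
  field_simp
  ring


lemma T1 (x : ℝ) (h : 1/4 < x) :
    Real.arcsin (1/(2*Real.sqrt x)) = Real.arctan (1/Real.sqrt (4*x-1)) := by
  have hx : 0 < x := by linarith
  have ht : 0 < Real.sqrt x := Real.sqrt_pos.2 hx
  have ht2 : Real.sqrt x ^ 2 = x := Real.sq_sqrt hx.le
  have hq : 0 < Real.sqrt (4*x-1) := Real.sqrt_pos.2 (by linarith)
  have hq2 : Real.sqrt (4*x-1) ^ 2 = 4*x-1 := Real.sq_sqrt (by linarith)
  set t := Real.sqrt x
  set q := Real.sqrt (4*x-1)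
  rw [Real.arctan_eq_arcsin]
  congr 1
  rw [show 1 + (1/q)^2 = (2*t/q)^2 by
    field_simp
    linear_combination hq2 - 4*ht2]
  rw [Real.sqrt_sq (by positivity)]
  field_simp

lemma T2 (x : ℝ) (h : 1/4 < x) (hx1 : x ≠ 1) :
    |1-x| * Real.arcsin ((3*x-1)/(2*Real.sqrt x*x))
      = (x-1)*Real.arctan ((3*x-1)/((x-1)*Real.sqrt (4*x-1))) := by
  have hx : 0 < x := by linarith
  have ht : 0 < Real.sqrt x := Real.sqrt_pos.2 hx
  have ht2 : Real.sqrt x ^ 2 = x := Real.sq_sqrt hx.le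
  have hq : 0 < Real.sqrt (4*x-1) := Real.sqrt_pos.2 (by linarith)
  have hq2 : Real.sqrt (4*x-1) ^ 2 = 4*x-1 := Real.sq_sqrt (by linarith)
  set t := Real.sqrt x
  set q := Real.sqrt (4*x-1)
  have key : ((x-1)*q)^2 + (3*x-1)^2 = (2*t*x)^2 := by
    rw [mul_pow, mul_pow, mul_pow, hq2, ht2]; ring
  have hxne : x ≠ 0 := ne_of_gt hx
  have htne : t ≠ 0 := ne_of_gt ht
  have hqne : q ≠ 0 := ne_of_gt hq
  rcases lt_or_gt_of_ne hx1 with hlt | hgt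
  · have h1x : (0:ℝ) < 1 - x := by linarith
    have h1xne : (1:ℝ) - x ≠ 0 := ne_of_gt h1x
    have hx1ne : x - 1 ≠ 0 := by intro h'; apply h1xne; linarith
    have habs : |1-x| = 1-x := abs_of_pos h1x
    rw [habs, Real.arctan_eq_arcsin]
    rw [show 1 + ((3*x-1)/((x-1)*q))^2 = (2*t*x/((1-x)*q))^2 by
      field_simp
      nlinarith [key]]
    rw [Real.sqrt_sq (le_of_lt (div_pos (by positivity) (mul_pos h1x hq)))]
    rw [show (3*x-1)/((x-1)*q)/(2*t*x/((1-x)*q)) = -((3*x-1)/(2*t*x)) by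
      field_simp
      ring]
    rw [Real.arcsin_neg]
    ring
  · have hx1p : (0:ℝ) < x - 1 := by linarith
    have hx1ne : x - 1 ≠ 0 := ne_of_gt hx1p
    have habs : |1-x| = x-1 := by rw [abs_of_neg (by linarith)]; ring
    rw [habs, Real.arctan_eq_arcsin]
    congr 1
    rw [show 1 + ((3*x-1)/((x-1)*q))^2 = (2*t*x/((x-1)*q))^2 by
      field_simp
      nlinarith [key]]
    rw [Real.sqrt_sq (le_of_lt (div_pos (by positivity) (mul_pos hx1p hq)))]
    rw [show (3*x-1)/((x-1)*q)/(2*t*x/((x-1)*q)) = (3*x-1)/(2*t*x) by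
      field_simp]


lemma hasDeriv_F1 {u : ℝ} (hu : 0 < u) (hu4 : u < 4) :
    HasDerivAt (fun u : ℝ => (u-4)*Real.sqrt (4-(u-2)^2)/(4*Real.pi))
      ((u-1)*Real.sqrt (4-(u-2)^2)/(2*Real.pi*u)) u := by
  have h4 : 0 < 4-(u-2)^2 := by nlinarith
  have hs : 0 < Real.sqrt (4-(u-2)^2) := Real.sqrt_pos.2 h4
  set s := Real.sqrt (4-(u-2)^2) with hsdef
  have hs2 : s^2 = 4-(u-2)^2 := Real.sq_sqrt h4.le
  have hpoly : HasDerivAt (fun u : ℝ => 4-(u-2)^2) (-(2*(u-2))) u := by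
    exact ((hasDerivAt_const u (4:ℝ)).sub (((hasDerivAt_id u).sub_const 2).pow 2)).congr_deriv (by norm_num)
  have hsq : HasDerivAt (fun u : ℝ => Real.sqrt (4-(u-2)^2)) (-(2*(u-2))/(2*s)) u :=
    hpoly.sqrt (ne_of_gt h4)
  have h1 := (((hasDerivAt_id u).sub_const 4).mul hsq).div_const (4*Real.pi)
  refine h1.congr_deriv ?_
  have hpi := Real.pi_ne_zero
  rw [id, ← hsdef]
  field_simp
  linear_combination (-2*(u-2))*hs2
lemma intable_F1 : IntervalIntegrable (fun u : ℝ => |u-1| * Real.sqrt (4-(u-2)^2)/(2*Real.pi*u))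
    volume 0 1 := by
  have hpi := Real.pi_pos
  have hG : IntervalIntegrable (fun u : ℝ => u^(-(1/2):ℝ)*(1/Real.pi)) volume 0 1 :=
    (intervalIntegral.intervalIntegrable_rpow' (by norm_num)).mul_const _
  apply hG.mono_fun
  · apply ContinuousOn.aestronglyMeasurable _ measurableSet_uIoc
    have : Set.uIoc (0:ℝ) 1 = Set.Ioc 0 1 := Set.uIoc_of_le (by norm_num)
    rw [this]
    apply ContinuousOn.div (by fun_prop) (by fun_prop)
    intro u hu
    have : 0 < u := hu.1
    positivity
  · filter_upwards [ae_restrict_mem measurableSet_uIoc] with u hu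
    rw [Set.uIoc_of_le (by norm_num : (0:ℝ) ≤ 1)] at hu
    obtain ⟨hu0, hu1⟩ := hu
    have hs4 : (0:ℝ) ≤ 4-(u-2)^2 := by nlinarith
    have hfnn : 0 ≤ |u-1| * Real.sqrt (4-(u-2)^2)/(2*Real.pi*u) := by positivity
    have hgnn : (0:ℝ) ≤ u^(-(1/2):ℝ)*(1/Real.pi) := by positivity
    rw [Real.norm_eq_abs, Real.norm_eq_abs, abs_of_nonneg hfnn, abs_of_nonneg hgnn]
    have h1 : |u-1| ≤ 1 := by rw [abs_le]; constructor <;> linarith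
    have h2 : Real.sqrt (4-(u-2)^2) ≤ 2*Real.sqrt u := by
      rw [show 2*Real.sqrt u = Real.sqrt (4*u) by
        rw [show (4:ℝ)*u = 2^2*u by ring, Real.sqrt_mul (by positivity), Real.sqrt_sq (by norm_num)]]
      apply Real.sqrt_le_sqrt; nlinarith
    have hrw : u^(-(1/2):ℝ) = Real.sqrt u / u := by
      rw [show (-(1/2):ℝ) = 1/2 - 1 by norm_num, Real.rpow_sub hu0, Real.rpow_one,
        ← Real.sqrt_eq_rpow]
    rw [hrw]
    calc |u-1| * Real.sqrt (4-(u-2)^2)/(2*Real.pi*u)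
        ≤ 1*(2*Real.sqrt u)/(2*Real.pi*u) := by
          have hnum : |u-1| * Real.sqrt (4-(u-2)^2) ≤ 1*(2*Real.sqrt u) :=
            mul_le_mul h1 h2 (Real.sqrt_nonneg _) zero_le_one
          exact (div_le_div_iff_of_pos_right (by positivity)).2 hnum
      _ = Real.sqrt u / u * (1/Real.pi) := by field_simp


lemma main_integral (x : ℝ) (hx : 0 < x) (hx1 : x ≠ 1) (hq : 1/4 < x) :
    (∫ u in ((Real.sqrt x - 1)^2)..((Real.sqrt x + 1)^2),
      |u / x - 1| * Real.sqrt (4 * x - (u - 1 - x) ^ 2) / (2 * Real.pi * u))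
    = Fx x ((Real.sqrt x - 1)^2) + Fx x ((Real.sqrt x + 1)^2) - 2 * Fx x x := by
  have ht : 0 < Real.sqrt x := Real.sqrt_pos.2 hx
  have ht2 : Real.sqrt x ^ 2 = x := Real.sq_sqrt hx.le
  have htne1 : Real.sqrt x ≠ 1 := fun h => hx1 (by rw [← ht2, h]; norm_num)
  have ha : 0 < (Real.sqrt x - 1)^2 := by
    have h2 : Real.sqrt x - 1 ≠ 0 := sub_ne_zero.2 htne1
    positivity
  have hthalf : 1/2 < Real.sqrt x := by nlinarith
  have hax : (Real.sqrt x - 1)^2 ≤ x := by nlinarith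
  have hxb : x ≤ (Real.sqrt x + 1)^2 := by nlinarith
  have hcont : ∀ v w : ℝ, (Real.sqrt x - 1)^2 ≤ v → v ≤ w →
      IntervalIntegrable (fun u : ℝ =>
        |u / x - 1| * Real.sqrt (4 * x - (u - 1 - x) ^ 2) / (2 * Real.pi * u)) volume v w := by
    intro v w hv hvw
    apply ContinuousOn.intervalIntegrable_of_Icc hvw
    apply ContinuousOn.div (by fun_prop) (by fun_prop)
    intro u hu
    have h0 : 0 < u := lt_of_lt_of_le ha (le_trans hv hu.1)
    positivity
  rw [← intervalIntegral.integral_add_adjacent_intervals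
    (hcont _ _ le_rfl hax) (hcont _ _ hax hxb)]
  have h1 : (∫ u in ((Real.sqrt x - 1)^2)..x,
      |u / x - 1| * Real.sqrt (4 * x - (u - 1 - x) ^ 2) / (2 * Real.pi * u))
      = -(Fx x x - Fx x ((Real.sqrt x - 1)^2)) := by
    rw [intervalIntegral.integral_congr (g := fun u : ℝ =>
      -((u / x - 1) * Real.sqrt (4 * x - (u - 1 - x) ^ 2) / (2 * Real.pi * u)))]
    · rw [intervalIntegral.integral_neg]
      congr 1
      exact ftc x hx hx1 le_rfl hax hxb
    · intro u hu
      rw [Set.uIcc_of_le hax] at hu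
      simp only
      rw [abs_of_nonpos (by rw [sub_nonpos, div_le_one hx]; exact hu.2)]
      ring
  have h2 : (∫ u in x..(Real.sqrt x + 1)^2,
      |u / x - 1| * Real.sqrt (4 * x - (u - 1 - x) ^ 2) / (2 * Real.pi * u))
      = Fx x ((Real.sqrt x + 1)^2) - Fx x x := by
    rw [intervalIntegral.integral_congr (g := fun u : ℝ =>
      (u / x - 1) * Real.sqrt (4 * x - (u - 1 - x) ^ 2) / (2 * Real.pi * u))]
    · exact ftc x hx hx1 hax hxb le_rfl
    · intro u hu
      rw [Set.uIcc_of_le hxb] at hu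
      simp only
      rw [abs_of_nonneg (by rw [sub_nonneg, le_div_iff₀ hx]; linarith [hu.1])]
  rw [h1, h2]
  ring


/-- The first absolute moment `I(x) = ∫ |u/x − 1| dMP_x(u)` equals `2(1−x)` on
`(0, 1/4]`, `g(x)` on `(1/4, 1)`, and `g(x) + x − 1` on `[1, ∞)`. -/
theorem stmt13 (x : ℝ) (hx : 0 < x) :
    (x ≤ 1/4 → Ifun x = 2 * (1 - x)) ∧
    (1/4 < x → x < 1 → Ifun x = g x) ∧
    (1 ≤ x → Ifun x = g x + x - 1) := by
  have hpi : (0:ℝ) < Real.pi := Real.pi_pos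
  have hpine : Real.pi ≠ 0 := ne_of_gt hpi
  by_cases hx1 : x = 1
  · subst hx1
    refine ⟨fun h => absurd h (by norm_num), fun _ h => absurd h (lt_irrefl 1), fun _ => ?_⟩
    have hIfun : Ifun 1 = 3*Real.sqrt 3/(2*Real.pi) := by
      unfold Ifun
      rw [show (Real.sqrt 1 - 1)^2 = (0:ℝ) by rw [Real.sqrt_one]; ring,
        show (Real.sqrt 1 + 1)^2 = (4:ℝ) by rw [Real.sqrt_one]; norm_num]
      rw [MeasureTheory.integral_Icc_eq_integral_Ioc,
        ← intervalIntegral.integral_of_le (by norm_num : (0:ℝ) ≤ 4)]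
      rw [show (fun u : ℝ => |u / 1 - 1| * Real.sqrt (4*1 - (u-1-1)^2) / (2*Real.pi*u))
          = fun u : ℝ => |u-1| * Real.sqrt (4-(u-2)^2) / (2*Real.pi*u) by
        funext u; rw [div_one, show 4*(1:ℝ)-(u-1-1)^2 = 4-(u-2)^2 by ring]]
      have hi2 : IntervalIntegrable (fun u : ℝ => |u-1| * Real.sqrt (4-(u-2)^2)/(2*Real.pi*u))
          volume 1 4 := by
        apply ContinuousOn.intervalIntegrable_of_Icc (by norm_num)
        apply ContinuousOn.div (by fun_prop) (by fun_prop)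
        intro u hu
        have h1 : (1:ℝ) ≤ u := hu.1
        positivity
      rw [← intervalIntegral.integral_add_adjacent_intervals intable_F1 hi2]
      have hc1 : ∫ u in (0:ℝ)..1, |u-1| * Real.sqrt (4-(u-2)^2)/(2*Real.pi*u)
          = -((1-4)*Real.sqrt (4-(1-2)^2)/(4*Real.pi) - (0-4)*Real.sqrt (4-(0-2)^2)/(4*Real.pi)) := by
        rw [intervalIntegral.integral_congr
          (g := fun u : ℝ => -((u-1) * Real.sqrt (4-(u-2)^2)/(2*Real.pi*u)))]
        · rw [intervalIntegral.integral_neg]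
          congr 1
          apply intervalIntegral.integral_eq_sub_of_hasDeriv_right_of_le
            (f := fun u : ℝ => (u-4)*Real.sqrt (4-(u-2)^2)/(4*Real.pi))
            (by norm_num : (0:ℝ) ≤ 1)
          · exact Continuous.continuousOn (by fun_prop)
          · intro u hu
            exact (hasDeriv_F1 hu.1 (by linarith [hu.2])).hasDerivWithinAt
          · apply intable_F1.mono_fun
            · apply ContinuousOn.aestronglyMeasurable _ measurableSet_uIoc
              rw [Set.uIoc_of_le (by norm_num : (0:ℝ) ≤ 1)]
              apply ContinuousOn.div (by fun_prop) (by fun_prop)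
              intro u hu
              have : 0 < u := hu.1
              positivity
            · filter_upwards [ae_restrict_mem measurableSet_uIoc] with u hu
              rw [Set.uIoc_of_le (by norm_num : (0:ℝ) ≤ 1)] at hu
              have hu0 : 0 < u := hu.1
              have hs4 : (0:ℝ) ≤ 4-(u-2)^2 := by nlinarith [hu.2]
              rw [Real.norm_eq_abs, Real.norm_eq_abs, abs_div, abs_mul,
                abs_of_nonneg (Real.sqrt_nonneg _), abs_of_nonneg (by positivity : (0:ℝ) ≤ 2*Real.pi*u),
                abs_of_nonneg (by positivity : (0:ℝ) ≤ |u-1| * Real.sqrt (4-(u-2)^2)/(2*Real.pi*u))]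
        · intro u hu
          rw [Set.uIcc_of_le (by norm_num : (0:ℝ) ≤ 1)] at hu
          simp only
          rw [abs_of_nonpos (by linarith [hu.2] : u - 1 ≤ 0)]
          ring
      have hc2 : ∫ u in (1:ℝ)..4, |u-1| * Real.sqrt (4-(u-2)^2)/(2*Real.pi*u)
          = (4-4)*Real.sqrt (4-(4-2)^2)/(4*Real.pi) - (1-4)*Real.sqrt (4-(1-2)^2)/(4*Real.pi) := by
        rw [intervalIntegral.integral_congr
          (g := fun u : ℝ => (u-1) * Real.sqrt (4-(u-2)^2)/(2*Real.pi*u))]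
        · apply intervalIntegral.integral_eq_sub_of_hasDeriv_right_of_le
            (f := fun u : ℝ => (u-4)*Real.sqrt (4-(u-2)^2)/(4*Real.pi))
            (by norm_num : (1:ℝ) ≤ 4)
          · exact Continuous.continuousOn (by fun_prop)
          · intro u hu
            exact (hasDeriv_F1 (by linarith [hu.1]) hu.2).hasDerivWithinAt
          · apply ContinuousOn.intervalIntegrable_of_Icc (by norm_num)
            apply ContinuousOn.div (by fun_prop) (by fun_prop)
            intro u hu
            have h1 : (1:ℝ) ≤ u := hu.1
            positivity
        · intro u hu
          rw [Set.uIcc_of_le (by norm_num : (1:ℝ) ≤ 4)] at hu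
          simp only
          rw [abs_of_nonneg (by linarith [hu.1] : 0 ≤ u - 1)]
      rw [hc1, hc2]
      rw [show (4:ℝ)-(0-2)^2 = 0 by norm_num, show (4:ℝ)-(4-2)^2 = 0 by norm_num,
        show (4:ℝ)-(1-2)^2 = 3 by norm_num, Real.sqrt_zero]
      norm_num
      field_simp
      ring
    rw [hIfun]
    unfold g
    rw [show (1:ℝ) - 1 = 0 by ring]
    rw [show (4*(1:ℝ)-1) = 3 by norm_num]
    have harct : Real.arctan (1/Real.sqrt 3) = Real.pi/2 - Real.arctan (Real.sqrt 3) := by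
      rw [one_div]
      exact Real.arctan_inv_of_pos (Real.sqrt_pos.2 (by norm_num))
    rw [harct]
    field_simp
    ring
  · -- x ≠ 1
    have ht : 0 < Real.sqrt x := Real.sqrt_pos.2 hx
    have ht2 : Real.sqrt x ^ 2 = x := Real.sq_sqrt hx.le
    have htne1 : Real.sqrt x ≠ 1 := fun h => hx1 (by rw [← ht2, h]; norm_num)
    have ha : 0 < (Real.sqrt x - 1)^2 := by
      have h2 : Real.sqrt x - 1 ≠ 0 := sub_ne_zero.2 htne1
      positivity
    have hab : (Real.sqrt x - 1)^2 ≤ (Real.sqrt x + 1)^2 := by nlinarith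
    have hIfun : Ifun x = max (1-x) 0 +
        ∫ u in ((Real.sqrt x - 1)^2)..((Real.sqrt x + 1)^2),
          |u / x - 1| * Real.sqrt (4 * x - (u - 1 - x) ^ 2) / (2 * Real.pi * u) := by
      unfold Ifun
      rw [MeasureTheory.integral_Icc_eq_integral_Ioc, ← intervalIntegral.integral_of_le hab]
    refine ⟨?_, ?_, ?_⟩
    · -- x ≤ 1/4
      intro hq
      have htle : Real.sqrt x ≤ 1/2 := by nlinarith
      have hx1' : x < 1 := by nlinarith
      rw [hIfun]
      rw [intervalIntegral.integral_congr
        (g := fun u : ℝ => (u / x - 1) * Real.sqrt (4 * x - (u - 1 - x) ^ 2) / (2 * Real.pi * u)) ?_]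
      · rw [ftc x hx hx1 le_rfl hab le_rfl, Fx_a x hx hx1, Fx_b x hx,
          max_eq_left (by linarith), abs_of_pos (by linarith : (0:ℝ) < 1 - x)]
        ring
      · intro u hu
        rw [Set.uIcc_of_le hab] at hu
        have hxu : x ≤ u := by nlinarith [hu.1]
        simp only
        rw [abs_of_nonneg (by rw [sub_nonneg, le_div_iff₀ hx]; linarith : (0:ℝ) ≤ u / x - 1)]
    · -- 1/4 < x < 1
      intro hq hlt
      rw [hIfun, main_integral x hx hx1 hq, max_eq_left (by linarith),
        Fx_a x hx hx1, Fx_b x hx, Fx_x x hx, T1 x hq, T2 x hq hx1,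
        abs_of_pos (by linarith : (0:ℝ) < 1 - x)]
      unfold g
      have hqpos : 0 < Real.sqrt (4*x-1) := Real.sqrt_pos.2 (by linarith)
      have harct : Real.arctan (1/Real.sqrt (4*x-1))
          = Real.pi/2 - Real.arctan (Real.sqrt (4*x-1)) := by
        rw [one_div]; exact Real.arctan_inv_of_pos hqpos
      rw [show (4*x-1 : ℝ) = 4*x-1 from rfl]
      rw [harct]
      have hxne : x ≠ 0 := ne_of_gt hx
      field_simp
      ring
    · -- 1 ≤ x
      intro hge
      have hgt : 1 < x := lt_of_le_of_ne hge (fun h => hx1 h.symm)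
      have hq : 1/4 < x := by linarith
      rw [hIfun, main_integral x hx hx1 hq, max_eq_right (by linarith),
        Fx_a x hx hx1, Fx_b x hx, Fx_x x hx, T1 x hq, T2 x hq hx1,
        abs_of_neg (by linarith : 1 - x < (0:ℝ))]
      unfold g
      have hqpos : 0 < Real.sqrt (4*x-1) := Real.sqrt_pos.2 (by linarith)
      have harct : Real.arctan (1/Real.sqrt (4*x-1))
          = Real.pi/2 - Real.arctan (Real.sqrt (4*x-1)) := by
        rw [one_div]; exact Real.arctan_inv_of_pos hqpos
      rw [harct]
      have hxne : x ≠ 0 := ne_of_gt hx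
      field_simp
      ring
end

section
/- ∫_0^4 |u − 1| · √(4 − (u−2)²)/(2πu) du = 3√3/(2π). -/
open MeasureTheory Real

open Set intervalIntegral in
noncomputable def Haux : ℝ → ℝ := fun u => (u - 4) / 2 * Real.sqrt (4 * u - u ^ 2)

lemma Haux_cont : Continuous Haux := by
  unfold Haux
  continuity

lemma Haux_deriv {u : ℝ} (hu : u ∈ Set.Ioo (0:ℝ) 4) :
    HasDerivAt Haux ((u - 1) * Real.sqrt (4 - (u - 2) ^ 2) / u) u := by
  obtain ⟨h0, h4⟩ := hu
  have hpos : 0 < 4 * u - u ^ 2 := by nlinarith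
  have h1 : HasDerivAt (fun u : ℝ => 4 * u - u ^ 2) (4 - 2 * u) u := by
    have := ((hasDerivAt_id u).const_mul 4).sub ((hasDerivAt_pow 2 u))
    simp at this
    exact this
  have h2 : HasDerivAt (fun u : ℝ => Real.sqrt (4 * u - u ^ 2))
      (1 / (2 * Real.sqrt (4 * u - u ^ 2)) * (4 - 2 * u)) u :=
    (Real.hasDerivAt_sqrt hpos.ne').comp u h1
  have h3 : HasDerivAt (fun u : ℝ => (u - 4) / 2) (1 / 2) u := by
    have := ((hasDerivAt_id u).sub_const 4).div_const 2
    simpa using this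
  have h4' := h3.mul h2
  have key : 1 / 2 * Real.sqrt (4 * u - u ^ 2) +
      (u - 4) / 2 * (1 / (2 * Real.sqrt (4 * u - u ^ 2)) * (4 - 2 * u)) =
      (u - 1) * Real.sqrt (4 - (u - 2) ^ 2) / u := by
    have heq : (4 : ℝ) - (u - 2) ^ 2 = 4 * u - u ^ 2 := by ring
    rw [heq]
    set s := Real.sqrt (4 * u - u ^ 2) with hs
    have hsp : 0 < s := Real.sqrt_pos.mpr hpos
    have hs2 : s ^ 2 = 4 * u - u ^ 2 := Real.sq_sqrt hpos.le
    field_simp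
    nlinarith [hs2, hsp, h0]
  rw [← key]
  exact h4'

lemma bound_int : IntervalIntegrable (fun u : ℝ => (π)⁻¹ * u ^ (-(1/2) : ℝ)) volume 0 1 :=
  (intervalIntegral.intervalIntegrable_rpow' (by norm_num)).const_mul _

lemma norm_bound {u : ℝ} (hu : u ∈ Set.Ioc (0:ℝ) 1) :
    ‖|u - 1| * Real.sqrt (4 - (u - 2) ^ 2) / (2 * Real.pi * u)‖ ≤
      (π)⁻¹ * u ^ (-(1/2) : ℝ) := by
  obtain ⟨h0, h1⟩ := hu
  have hsq : Real.sqrt (4 - (u - 2) ^ 2) ≤ 2 * Real.sqrt u := by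
    have : (4 : ℝ) - (u - 2) ^ 2 ≤ 4 * u := by nlinarith
    calc Real.sqrt (4 - (u - 2) ^ 2) ≤ Real.sqrt (4 * u) := Real.sqrt_le_sqrt this
      _ = 2 * Real.sqrt u := by
          rw [show (4:ℝ) * u = 2^2 * u by norm_num, Real.sqrt_mul (by positivity),
            Real.sqrt_sq (by norm_num)]
  have habs : |u - 1| ≤ 1 := by rw [abs_le]; constructor <;> linarith
  have hden : 0 < 2 * Real.pi * u := by positivity
  have hrw : u ^ (-(1/2) : ℝ) = (Real.sqrt u)⁻¹ := by
    rw [Real.rpow_neg h0.le, Real.sqrt_eq_rpow]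
  rw [Real.norm_eq_abs, abs_div, abs_of_pos hden, abs_mul, abs_abs,
    abs_of_nonneg (Real.sqrt_nonneg _), hrw]
  have hsu : 0 < Real.sqrt u := Real.sqrt_pos.mpr h0
  rw [div_le_iff₀ hden]
  have hkey : π⁻¹ * (Real.sqrt u)⁻¹ * (2 * Real.pi * u) = 2 * Real.sqrt u := by
    field_simp
    nlinarith [Real.mul_self_sqrt h0.le, Real.pi_pos]
  calc |u - 1| * Real.sqrt (4 - (u - 2) ^ 2) ≤ 1 * (2 * Real.sqrt u) := by
        apply mul_le_mul habs hsq (Real.sqrt_nonneg _) (by norm_num)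
    _ = 2 * Real.sqrt u := by ring
    _ = π⁻¹ * (Real.sqrt u)⁻¹ * (2 * Real.pi * u) := hkey.symm


/-- `∫₀⁴ |u − 1| √(4 − (u−2)²)/(2πu) du = 3√3/(2π)`: the first absolute moment of the
centered Marčenko–Pastur distribution of parameter 1. -/
theorem stmt14 :
    (∫ u in Set.Ioc (0 : ℝ) 4, |u - 1| * Real.sqrt (4 - (u - 2) ^ 2) / (2 * Real.pi * u)) =
      3 * Real.sqrt 3 / (2 * Real.pi) := by
  have hc1 : Continuous fun u : ℝ => |u - 1| * Real.sqrt (4 - (u - 2) ^ 2) := by continuity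
  have hc2 : Continuous fun u : ℝ => 2 * Real.pi * u := by continuity
  have hmeas : Measurable (fun u : ℝ => |u - 1| * Real.sqrt (4 - (u - 2) ^ 2) / (2 * Real.pi * u)) :=
    hc1.measurable.div hc2.measurable
  -- integrability on [0,1]
  have hint01 : IntervalIntegrable
      (fun u : ℝ => |u - 1| * Real.sqrt (4 - (u - 2) ^ 2) / (2 * Real.pi * u)) volume 0 1 := by
    rw [intervalIntegrable_iff_integrableOn_Ioc_of_le (by norm_num)]
    apply Integrable.mono (g := fun u : ℝ => (π)⁻¹ * u ^ (-(1/2) : ℝ))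
    · have := bound_int
      rw [intervalIntegrable_iff_integrableOn_Ioc_of_le (by norm_num : (0:ℝ) ≤ 1)] at this
      exact this
    · exact hmeas.aestronglyMeasurable.restrict
    · filter_upwards [ae_restrict_mem measurableSet_Ioc] with u hu
      refine (norm_bound hu).trans ?_
      rw [Real.norm_eq_abs]
      exact le_abs_self _
  have hint14 : IntervalIntegrable
      (fun u : ℝ => |u - 1| * Real.sqrt (4 - (u - 2) ^ 2) / (2 * Real.pi * u)) volume 1 4 := by
    apply ContinuousOn.intervalIntegrable
    apply ContinuousOn.div hc1.continuousOn hc2.continuousOn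
    intro x hx
    rw [Set.uIcc_of_le (by norm_num)] at hx
    have : (0:ℝ) < x := lt_of_lt_of_le one_pos hx.1
    positivity
  -- part 1 : 0..1
  have part1 : (∫ u in (0:ℝ)..1, |u - 1| * Real.sqrt (4 - (u - 2) ^ 2) / (2 * Real.pi * u)) =
      (2 * Real.pi)⁻¹ * (3 / 2 * Real.sqrt 3) := by
    have hcongr : ∀ u ∈ Set.uIcc (0:ℝ) 1,
        |u - 1| * Real.sqrt (4 - (u - 2) ^ 2) / (2 * Real.pi * u) =
        (2 * Real.pi)⁻¹ * (-((u - 1) * Real.sqrt (4 - (u - 2) ^ 2) / u)) := by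
      intro u hu
      rw [Set.uIcc_of_le (by norm_num)] at hu
      have : |u - 1| = -(u - 1) := abs_of_nonpos (by linarith [hu.2])
      rw [this]
      field_simp
    rw [intervalIntegral.integral_congr hcongr, intervalIntegral.integral_const_mul]
    have hftc : (∫ u in (0:ℝ)..1, -((u - 1) * Real.sqrt (4 - (u - 2) ^ 2) / u)) =
        (-Haux) 1 - (-Haux) 0 := by
      apply intervalIntegral.integral_eq_sub_of_hasDeriv_right_of_le (by norm_num)
      · exact (Haux_cont.neg).continuousOn
      · intro x hx
        have hx' : x ∈ Set.Ioo (0:ℝ) 4 := ⟨hx.1, by linarith [hx.2]⟩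
        exact ((Haux_deriv hx').neg.hasDerivWithinAt)
      · rw [intervalIntegrable_iff_integrableOn_Ioc_of_le (by norm_num : (0:ℝ) ≤ 1)]
        have h2 : IntegrableOn
            (fun u : ℝ => 2 * Real.pi * (|u - 1| * Real.sqrt (4 - (u - 2) ^ 2) / (2 * Real.pi * u)))
            (Set.Ioc (0:ℝ) 1) := by
          exact ((intervalIntegrable_iff_integrableOn_Ioc_of_le (by norm_num)).mp hint01).const_mul _
        apply h2.congr_fun ?_ measurableSet_Ioc
        intro u hu
        have hu0 : u ≠ 0 := ne_of_gt hu.1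
        have : |u - 1| = -(u - 1) := abs_of_nonpos (by linarith [hu.2])
        simp only [this]
        have hπ : Real.pi ≠ 0 := Real.pi_ne_zero
        field_simp
    rw [hftc]
    have hH1 : Haux 1 = -(3 / 2) * Real.sqrt 3 := by unfold Haux; norm_num
    have hH0 : Haux 0 = 0 := by unfold Haux; norm_num
    rw [Pi.neg_apply, Pi.neg_apply, hH1, hH0]
    ring
  -- part 2 : 1..4
  have part2 : (∫ u in (1:ℝ)..4, |u - 1| * Real.sqrt (4 - (u - 2) ^ 2) / (2 * Real.pi * u)) =
      (2 * Real.pi)⁻¹ * (3 / 2 * Real.sqrt 3) := by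
    have hcongr : ∀ u ∈ Set.uIcc (1:ℝ) 4,
        |u - 1| * Real.sqrt (4 - (u - 2) ^ 2) / (2 * Real.pi * u) =
        (2 * Real.pi)⁻¹ * ((u - 1) * Real.sqrt (4 - (u - 2) ^ 2) / u) := by
      intro u hu
      rw [Set.uIcc_of_le (by norm_num)] at hu
      have : |u - 1| = u - 1 := abs_of_nonneg (by linarith [hu.1])
      rw [this]
      field_simp
      try ring
    rw [intervalIntegral.integral_congr hcongr, intervalIntegral.integral_const_mul]
    have hftc : (∫ u in (1:ℝ)..4, (u - 1) * Real.sqrt (4 - (u - 2) ^ 2) / u) =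
        Haux 4 - Haux 1 := by
      apply intervalIntegral.integral_eq_sub_of_hasDeriv_right_of_le (by norm_num)
      · exact Haux_cont.continuousOn
      · intro x hx
        have hx' : x ∈ Set.Ioo (0:ℝ) 4 := ⟨by linarith [hx.1], hx.2⟩
        exact (Haux_deriv hx').hasDerivWithinAt
      · apply ContinuousOn.intervalIntegrable
        apply ContinuousOn.div (Continuous.continuousOn (by continuity)) continuousOn_id
        intro x hx
        rw [Set.uIcc_of_le (by norm_num)] at hx
        have : (0:ℝ) < x := lt_of_lt_of_le one_pos hx.1
        exact ne_of_gt this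
    rw [hftc]
    have hH1 : Haux 1 = -(3 / 2) * Real.sqrt 3 := by unfold Haux; norm_num
    have hH4 : Haux 4 = 0 := by unfold Haux; norm_num
    rw [hH1, hH4]
    ring
  rw [← intervalIntegral.integral_of_le (by norm_num : (0:ℝ) ≤ 4),
    ← intervalIntegral.integral_add_adjacent_intervals hint01 hint14, part1, part2]
  have hπ : Real.pi ≠ 0 := Real.pi_ne_zero
  field_simp
  ring
end

section
/- With g(x) = 3/2 − x + √(4x−1)(2x+1)/(2πx) − (1/π)·[(x−1)·arctan((3x−1)/((x−1)√(4x−1))) + arctan(√(4x−1)) + x·arctan(1/√(4x−1))], the function h(x) = g(x) + x − 1 satisfies lim_{x→∞} √x · h(x) = 8/(3π). -/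
open Filter Real

noncomputable def zf (x : ℝ) : ℝ :=
  (2*x - 1) * Real.sqrt (4*x - 1) / (2*x^2 - 4*x + 1)

noncomputable def Ef (x : ℝ) : ℝ :=
  Real.sqrt x * Real.sqrt (4*x - 1) * (2*x + 1) / (2*x) - Real.sqrt x * (x - 1) * zf x

noncomputable def Bf (x : ℝ) : ℝ :=
  Real.sqrt x * (x - 1) * (zf x - Real.arctan (zf x))

noncomputable def Uf (x : ℝ) : ℝ :=
  Real.sqrt x * (x - 1) * ((zf x)^3/3)

noncomputable def Lf (x : ℝ) : ℝ :=
  Real.sqrt x * (x - 1) * ((zf x)^3/(3*(1 + (zf x)^2)))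

lemma arctan_lb {z : ℝ} (hz : 0 ≤ z) : z - z^3/3 ≤ Real.arctan z := by
  have hmono : Monotone (fun z : ℝ => Real.arctan z - z + z^3/3) := by
    apply monotone_of_hasDerivAt_nonneg (f' := fun z => z^4/(1+z^2))
    · intro z
      have h1 : (1:ℝ) + z^2 ≠ 0 := by positivity
      have h := ((Real.hasDerivAt_arctan z).sub (hasDerivAt_id z)).add
        ((hasDerivAt_pow 3 z).div_const 3)
      refine h.congr_deriv ?_
      push_cast
      field_simp
      ring
    · rw [Pi.le_def]
      intro z
      simp only [Pi.zero_apply]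
      positivity
  have := hmono hz
  simp only [Real.arctan_zero] at this
  norm_num at this
  linarith

lemma arctan_ub {z : ℝ} (hz : 0 ≤ z) : Real.arctan z ≤ z - z^3/(3*(1+z^2)) := by
  have hmono : Monotone (fun z : ℝ => z - z^3/(3*(1+z^2)) - Real.arctan z) := by
    apply monotone_of_hasDerivAt_nonneg (f' := fun z => 2*z^4/(3*(1+z^2)^2))
    · intro z
      have hd : (3*(1+z^2)) ≠ 0 := by positivity
      have h := ((hasDerivAt_id z).sub
        (((hasDerivAt_pow 3 z).div
          ((((hasDerivAt_pow 2 z).const_add 1).const_mul 3)) hd))).sub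
        (Real.hasDerivAt_arctan z)
      refine h.congr_deriv ?_
      push_cast
      field_simp
      ring
    · rw [Pi.le_def]
      intro z
      simp only [Pi.zero_apply]
      positivity
  have := hmono hz
  simp only [Real.arctan_zero] at this
  norm_num at this
  linarith

lemma tendsto_comp_inv {F f : ℝ → ℝ} {a : ℝ}
    (hF : ContinuousAt F 0) (hFa : F 0 = a)
    (heq : ∀ᶠ x in atTop, F x⁻¹ = f x) :
    Tendsto f atTop (nhds a) := by
  have : Tendsto (fun x : ℝ => F x⁻¹) atTop (nhds a) := by
    rw [← hFa]
    exact hF.tendsto.comp tendsto_inv_atTop_zero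
  exact this.congr' heq

lemma key_identity {x : ℝ} (hx : 2 < x) :
    Real.pi * (g x + x - 1) =
      Real.sqrt (4*x - 1) * (2*x + 1) / (2*x) - (x - 1) * Real.arctan (zf x) := by
  have hx0 : (0:ℝ) < x := by linarith
  have hx1 : (0:ℝ) < x - 1 := by linarith
  have hs0 : (0:ℝ) < 4*x - 1 := by linarith
  have hs : 0 < Real.sqrt (4*x - 1) := Real.sqrt_pos.mpr hs0
  have hss : Real.sqrt (4*x - 1) ^ 2 = 4*x - 1 := Real.sq_sqrt hs0.le
  have hq : (0:ℝ) < 2*x^2 - 4*x + 1 := by nlinarith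
  set s := Real.sqrt (4*x - 1) with hsdef
  set a := (3*x - 1) / ((x - 1) * s) with hadef
  have step1 : Real.arctan (1/s) = Real.pi/2 - Real.arctan s := by
    rw [one_div, Real.arctan_inv_of_pos hs]
  have hmul : a * (1/s) = (3*x - 1) / ((x - 1) * (4*x - 1)) := by
    rw [hadef, div_mul_div_comm, mul_one, mul_assoc, ← hss, sq]
  have step2 : a * (1/s) < 1 := by
    rw [hmul, div_lt_one (by positivity)]
    nlinarith
  have step3 : Real.arctan a + Real.arctan (1/s) =
      Real.arctan ((a + 1/s) / (1 - a * (1/s))) := Real.arctan_add step2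
  have step4 : (a + 1/s) / (1 - a * (1/s)) = zf x := by
    rw [hmul, hadef, zf, ← hsdef]
    have h41 : 4*x-1 ≠ 0 := hs0.ne'
    have hx1' : x-1 ≠ 0 := hx1.ne'
    have e1 : (3*x-1)/((x-1)*s) + 1/s = (4*x-2)/((x-1)*s) := by
      field_simp
      ring
    have e2 : 1 - (3*x-1)/((x-1)*(4*x-1)) = 2*(2*x^2-4*x+1)/((x-1)*(4*x-1)) := by
      rw [eq_div_iff (mul_ne_zero hx1' h41), sub_mul, div_mul_cancel₀ _ (mul_ne_zero hx1' h41)]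
      ring
    have hq' : 2*x^2-4*x+1 ≠ 0 := hq.ne'
    rw [e1, e2, ← hss]
    field_simp
    ring
  have step3' : Real.arctan a + Real.arctan (1/s) = Real.arctan (zf x) := by
    rw [step3, step4]
  have e1 : (x - 1) * Real.arctan a + Real.arctan s + x * Real.arctan (1/s)
      = (x - 1) * Real.arctan (zf x) + Real.pi/2 := by
    linear_combination (x - 1) * step3' + step1
  rw [g, ← hsdef, ← hadef, e1]
  field_simp
  ring

lemma sqrt_split {x : ℝ} (hx : 2 < x) :
    Real.sqrt (4*x - 1) = Real.sqrt x * Real.sqrt (4 - x⁻¹) := by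
  have hx0 : (0:ℝ) < x := by linarith
  rw [show 4*x - 1 = x * (4 - x⁻¹) by field_simp, Real.sqrt_mul hx0.le]

lemma zf_nonneg {x : ℝ} (hx : 2 < x) : 0 ≤ zf x := by
  have hq : (0:ℝ) < 2*x^2 - 4*x + 1 := by nlinarith
  apply div_nonneg _ hq.le
  exact mul_nonneg (by linarith) (Real.sqrt_nonneg _)

lemma denom_pos {x : ℝ} (hx : 2 < x) : (0:ℝ) < (x⁻¹)^2 - 4*x⁻¹ + 2 := by
  have hx0 : (0:ℝ) < x := by linarith
  have h1 : (0:ℝ) < x⁻¹ := by positivity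
  have h2 : x⁻¹ < 1/2 := by
    rw [inv_lt_iff_one_lt_mul₀ hx0]
    linarith
  nlinarith [sq_nonneg x⁻¹]

lemma hE : Tendsto Ef atTop (nhds 0) := by
  apply tendsto_comp_inv
    (F := fun u : ℝ => Real.sqrt (4 - u) * (((u)^2 - 4*u)/(2*((u)^2 - 4*u + 2))))
  · apply ContinuousAt.mul
    · exact Real.continuous_sqrt.continuousAt.comp (by fun_prop)
    · exact ContinuousAt.div (by fun_prop) (by fun_prop) (by norm_num)
  · norm_num
  · filter_upwards [eventually_gt_atTop 2] with x hx
    have hx0 : (0:ℝ) < x := by linarith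
    have hq : (0:ℝ) < 2*x^2 - 4*x + 1 := by nlinarith
    have hu := denom_pos hx
    set c := Real.sqrt (4 - x⁻¹) with hcdef
    have hrc : Real.sqrt x * Real.sqrt (4*x - 1) = x * c := by
      rw [sqrt_split hx, ← mul_assoc, Real.mul_self_sqrt hx0.le]
    have hEq : Ef x = x*c*(2*x+1)/(2*x) - (x-1)*(2*x-1)*(x*c)/(2*x^2-4*x+1) := by
      rw [Ef, zf, ← hrc]
      ring
    have h2 : (x⁻¹)^2 - 4*x⁻¹ = (1-4*x)/x^2 := by
      field_simp
    have h1 : (x⁻¹)^2 - 4*x⁻¹ + 2 = (2*x^2-4*x+1)/x^2 := by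
      field_simp
      ring
    rw [hEq, h1, h2]
    have hq' : 2*x^2-4*x+1 ≠ 0 := hq.ne'
    have h3 : x^2 * (2*((2 * x ^ 2 - 4 * x + 1)/x^2)) = 2*(2 * x ^ 2 - 4 * x + 1) := by
      field_simp
    rw [div_div, mul_div_assoc', h3, eq_sub_iff_add_eq, div_add_div _ _ (by positivity) hq', div_eq_div_iff (by positivity) (by positivity)]
    ring

lemma hU : Tendsto Uf atTop (nhds (8/3)) := by
  apply tendsto_comp_inv
    (F := fun u : ℝ => (Real.sqrt (4 - u))^3 * ((1 - u)*(2 - u)^3/(3*((u)^2 - 4*u + 2)^3)))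
  · apply ContinuousAt.mul
    · exact (Real.continuous_sqrt.continuousAt.comp (by fun_prop)).pow 3
    · exact ContinuousAt.div (by fun_prop) (by fun_prop) (by norm_num)
  · have h4 : Real.sqrt 4 = 2 := by
      rw [show (4:ℝ) = 2^2 by norm_num, Real.sqrt_sq (by norm_num)]
    norm_num [h4]
  · filter_upwards [eventually_gt_atTop 2] with x hx
    have hx0 : (0:ℝ) < x := by linarith
    have hq : (0:ℝ) < 2*x^2 - 4*x + 1 := by nlinarith
    have hu := denom_pos hx
    have hs0 : (0:ℝ) < 4*x - 1 := by linarith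
    set c := Real.sqrt (4 - x⁻¹) with hcdef
    have hrc : Real.sqrt x * Real.sqrt (4*x - 1) = x * c := by
      rw [sqrt_split hx, ← mul_assoc, Real.mul_self_sqrt hx0.le]
    have hsq2 : Real.sqrt (4*x - 1)^2 = 4*x - 1 := Real.sq_sqrt hs0.le
    have hs3 : Real.sqrt (4*x - 1)^3 = (4*x - 1) * Real.sqrt (4*x - 1) := by
      rw [pow_succ, hsq2, mul_comm]
    have hEq : Uf x = (x-1)*(2*x-1)^3*((Real.sqrt x * Real.sqrt (4*x-1))*(4*x-1))/(3*(2*x^2-4*x+1)^3) := by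
      rw [Uf, zf, div_pow, mul_pow, hs3]
      field_simp
    rw [hEq, hrc]
    have hc2 : c^2 = 4 - x⁻¹ := Real.sq_sqrt (by nlinarith [inv_pos.mpr hx0, inv_lt_one_of_one_lt₀ (by linarith : (1:ℝ) < x)])
    have hc3 : c^3 = (4 - x⁻¹)*c := by
      rw [pow_succ, hc2, mul_comm]
    rw [hc3]
    have h1 : (x⁻¹)^2 - 4*x⁻¹ + 2 = (2*x^2-4*x+1)/x^2 := by
      field_simp
      ring
    have h3 : 1 - x⁻¹ = (x-1)/x := by field_simp
    have h4 : 2 - x⁻¹ = (2*x-1)/x := by field_simp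
    have h5 : 4 - x⁻¹ = (4*x-1)/x := by field_simp
    rw [h1, h3, h4, h5]
    field_simp

lemma hz2 : Tendsto (fun x => (zf x)^2) atTop (nhds 0) := by
  apply tendsto_comp_inv
    (F := fun u : ℝ => u*(2 - u)^2*(4 - u)/((u)^2 - 4*u + 2)^2)
  · exact ContinuousAt.div (by fun_prop) (by fun_prop) (by norm_num)
  · norm_num
  · filter_upwards [eventually_gt_atTop 2] with x hx
    have hx0 : (0:ℝ) < x := by linarith
    have hs0 : (0:ℝ) < 4*x - 1 := by linarith
    have hq : (0:ℝ) < 2*x^2 - 4*x + 1 := by nlinarith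
    have hu := denom_pos hx
    rw [zf, div_pow, mul_pow, Real.sq_sqrt hs0.le]
    have h1 : (x⁻¹)^2 - 4*x⁻¹ + 2 = (2*x^2-4*x+1)/x^2 := by
      field_simp
      ring
    have h4 : 2 - x⁻¹ = (2*x-1)/x := by field_simp
    have h5 : 4 - x⁻¹ = (4*x-1)/x := by field_simp
    rw [h1, h4, h5]
    field_simp

lemma hL : Tendsto Lf atTop (nhds (8/3)) := by
  have h1 : Tendsto (fun x => 1 + (zf x)^2) atTop (nhds 1) := by
    have := tendsto_const_nhds (α := ℝ) (x := (1:ℝ)) (f := atTop).add hz2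
    simpa using this
  have h2 := hU.div h1 (by norm_num)
  norm_num at h2
  apply h2.congr
  intro x
  have hz : (1:ℝ) + (zf x)^2 ≠ 0 := by positivity
  simp only [Pi.div_apply, Uf, Lf]
  field_simp

lemma hB : Tendsto Bf atTop (nhds (8/3)) := by
  apply tendsto_of_tendsto_of_tendsto_of_le_of_le' hL hU
  · filter_upwards [eventually_gt_atTop 2] with x hx
    have hm : 0 ≤ Real.sqrt x * (x - 1) :=
      mul_nonneg (Real.sqrt_nonneg _) (by linarith)
    have hz := zf_nonneg hx
    have h := arctan_ub hz
    rw [Lf, Bf]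
    apply mul_le_mul_of_nonneg_left _ hm
    linarith
  · filter_upwards [eventually_gt_atTop 2] with x hx
    have hm : 0 ≤ Real.sqrt x * (x - 1) :=
      mul_nonneg (Real.sqrt_nonneg _) (by linarith)
    have hz := zf_nonneg hx
    have h := arctan_lb hz
    rw [Uf, Bf]
    apply mul_le_mul_of_nonneg_left _ hm
    linarith

/-- `h(x) = g(x) + x − 1` satisfies `√x · h(x) → 8/(3π)` as `x → ∞`. -/
theorem stmt15 :
    Tendsto (fun x : ℝ => Real.sqrt x * (g x + x - 1)) atTop
      (nhds (8 / (3 * Real.pi))) := by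
  have hmain : Tendsto (fun x => (1/Real.pi) * (Ef x + Bf x)) atTop
      (nhds ((1/Real.pi) * (0 + 8/3))) := (hE.add hB).const_mul (1/Real.pi)
  have hconst : (1/Real.pi) * (0 + 8/3) = 8 / (3 * Real.pi) := by
    field_simp
    ring
  rw [hconst] at hmain
  apply hmain.congr'
  filter_upwards [eventually_gt_atTop 2] with x hx
  have hx0 : (0:ℝ) < x := by linarith
  have h := key_identity hx
  rw [one_div, inv_mul_eq_div, div_eq_iff Real.pi_ne_zero]
  rw [Ef, Bf]
  linear_combination (-Real.sqrt x) * h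
end
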